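/- If there is a partition of ℝ into κ Borel sets with κ uncountable, and moreover κ ≥ 𝔞_T (the least cardinality of a partition of the Baire space ω^ω into compact sets), then there is a partition of ℝ into κ compact sets. -/

import Mathlib

open Set Metric TopologicalSpace

section Children
variable {X : Type} [MetricSpace X] [SecondCountableTopology X] [Nonempty X]

/-- Partition a locally closed set `K ∩ U` into countably many locally closed pieces of
diameter `≤ ε` whose closures are contained in `K ∩ U`. -/
lemma children_aux (K U : Set X) (hK : IsClosed K) (hU : IsOpen U) (ε : ℝ) (hε : 0 < ε) :
    ∃ D : ℕ → Set X × Set X,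
      (∀ i, IsClosed (D i).1 ∧ IsOpen (D i).2) ∧
      (∀ i j, i ≠ j → Disjoint ((D i).1 ∩ (D i).2) ((D j).1 ∩ (D j).2)) ∧
      (⋃ i, (D i).1 ∩ (D i).2) = K ∩ U ∧
      (∀ i, closure ((D i).1 ∩ (D i).2) ⊆ K ∩ U) ∧
      (∀ i, ∀ a ∈ (D i).1 ∩ (D i).2, ∀ b ∈ (D i).1 ∩ (D i).2, dist a b ≤ ε) := by
  classical
  obtain ⟨u, hu⟩ : ∃ u : ℕ → X, DenseRange u := ⟨denseSeq X, denseRange_denseSeq X⟩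
  set V : ℕ → Set X := fun k => ball (u k) (ε / 2) with hV
  have hVopen : ∀ k, IsOpen (V k) := fun k => isOpen_ball
  have hVcover : (⋃ k, V k) = univ := by
    ext x
    simp only [mem_iUnion, mem_univ, iff_true]
    obtain ⟨k, hk⟩ := (Metric.denseRange_iff.1 hu) x (ε/2) (by linarith)
    exact ⟨k, by simpa [hV, mem_ball, dist_comm] using hk⟩
  -- the closed approximations of U
  set W : ℕ → Set X := fun n => {x | ∀ y ∈ Uᶜ, ((n : ℝ) + 1)⁻¹ ≤ dist x y} with hW
  have hWclosed : ∀ n, IsClosed (W n) := by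
    intro n
    have : W n = ⋂ y ∈ Uᶜ, {x | ((n : ℝ) + 1)⁻¹ ≤ dist x y} := by
      ext x; simp [hW]
    rw [this]
    exact isClosed_biInter fun y _ => isClosed_le continuous_const (by continuity)
  have hWU : ∀ n, W n ⊆ U := by
    intro n x hx
    by_contra hxU
    have := hx x hxU
    have h0 : (0:ℝ) < ((n : ℝ) + 1)⁻¹ := by positivity
    simp [dist_self] at this
    linarith
  have hWmono : Monotone W := by
    intro m n hmn x hx y hy
    refine le_trans ?_ (hx y hy)
    gcongr
  have hWcover : U ⊆ ⋃ n, W n := by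
    intro x hx
    obtain ⟨r, hr, hball⟩ := Metric.isOpen_iff.1 hU x hx
    obtain ⟨n, hn⟩ := exists_nat_gt r⁻¹
    refine mem_iUnion.2 ⟨n, fun y hy => ?_⟩
    have hyb : y ∉ ball x r := fun h => hy (hball h)
    have : r ≤ dist x y := by simpa [mem_ball, dist_comm] using hyb
    refine le_trans ?_ this
    rw [inv_le_comm₀ (by positivity) hr]
    nlinarith [hn]
  set Cs : ℕ → Set X := fun n => K ∩ W n with hCs
  have hCsclosed : ∀ n, IsClosed (Cs n) := fun n => hK.inter (hWclosed n)
  have hCsmono : Monotone Cs := fun m n h => inter_subset_inter_right _ (hWmono h)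
  have hCsU : (⋃ n, Cs n) = K ∩ U := by
    apply subset_antisymm
    · exact iUnion_subset fun n => inter_subset_inter_right _ (hWU n)
    · rintro x ⟨hxK, hxU⟩
      obtain ⟨n, hn⟩ := mem_iUnion.1 (hWcover hxU)
      exact mem_iUnion.2 ⟨n, hxK, hn⟩
  -- previous closed set
  set prevC : ℕ → Set X := fun n => Nat.rec ∅ (fun m _ => Cs m) n with hprevC
  have hprev0 : prevC 0 = ∅ := rfl
  have hprevS : ∀ n, prevC (n + 1) = Cs n := fun n => rfl
  have hprevclosed : ∀ n, IsClosed (prevC n) := by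
    intro n; cases n with
    | zero => simpa [hprev0] using isClosed_empty
    | succ m => rw [hprevS]; exact hCsclosed m
  have hprevsub : ∀ n, prevC n ⊆ Cs n := by
    intro n; cases n with
    | zero => simp [hprev0]
    | succ m => rw [hprevS]; exact hCsmono (Nat.le_succ m)
  -- the pieces
  obtain ⟨e⟩ : Nonempty (ℕ ≃ ℕ × ℕ) := ⟨(Denumerable.eqv (ℕ × ℕ)).symm⟩
  set D : ℕ → Set X × Set X := fun i =>
    (Cs (e i).1 ∩ (⋃ j < (e i).2, V j)ᶜ, V (e i).2 ∩ (prevC (e i).1)ᶜ) with hD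
  have hB : ∀ i, (D i).1 ∩ (D i).2 =
      (Cs (e i).1 \ prevC (e i).1) ∩ (V (e i).2 \ ⋃ j < (e i).2, V j) := by
    intro i
    simp only [hD, diff_eq]
    ext x; constructor
    · rintro ⟨⟨h1, h2⟩, h3, h4⟩; exact ⟨⟨h1, h4⟩, h3, h2⟩
    · rintro ⟨⟨h1, h4⟩, h3, h2⟩; exact ⟨⟨h1, h2⟩, h3, h4⟩
  refine ⟨D, ?_, ?_, ?_, ?_, ?_⟩
  · intro i
    constructor
    · exact (hCsclosed _).inter (isClosed_compl_iff.2 (isOpen_biUnion fun j _ => hVopen j))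
    · exact (hVopen _).inter (hprevclosed _).isOpen_compl
  · intro i j hij
    have hij' : e i ≠ e j := fun h => hij (e.injective h)
    rw [disjoint_left, hB i, hB j]
    rintro x ⟨⟨hx1, hx1'⟩, hx2, hx2'⟩ ⟨⟨hy1, hy1'⟩, hy2, hy2'⟩
    rcases Nat.lt_or_ge (e i).1 (e j).1 with h | h
    · refine hy1' ?_
      rw [show (e j).1 = ((e j).1 - 1) + 1 by omega, hprevS]
      exact hCsmono (by omega) hx1
    · rcases Nat.lt_or_ge (e j).1 (e i).1 with h' | h'
      · refine hx1' ?_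
        rw [show (e i).1 = ((e i).1 - 1) + 1 by omega, hprevS]
        exact hCsmono (by omega) hy1
      · have h1 : (e i).1 = (e j).1 := le_antisymm h' h
        have h2 : (e i).2 ≠ (e j).2 := by
          intro h2; exact hij' (Prod.ext h1 h2)
        rcases h2.lt_or_gt with h3 | h3
        · exact hy2' (mem_biUnion h3 hx2)
        · exact hx2' (mem_biUnion h3 hy2)
  · apply subset_antisymm
    · refine iUnion_subset fun i => ?_
      rw [hB i]
      refine subset_trans ?_ (subset_trans (subset_iUnion Cs (e i).1) hCsU.subset)
      rintro x ⟨⟨h1, _⟩, _⟩; exact h1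
    · intro x hx
      rw [← hCsU] at hx
      have hn : ∃ n, x ∈ Cs n := mem_iUnion.1 hx
      have hk : ∃ k, x ∈ V k := by
        have hx2 : x ∈ ⋃ k, V k := by rw [hVcover]; trivial
        exact mem_iUnion.1 hx2
      refine mem_iUnion.2 ⟨e.symm (Nat.find hn, Nat.find hk), ?_⟩
      rw [hB, e.apply_symm_apply]
      refine ⟨⟨Nat.find_spec hn, ?_⟩, Nat.find_spec hk, ?_⟩
      · intro hxp
        rcases Nat.eq_zero_or_eq_succ_pred (Nat.find hn) with h0 | hsp
        · rw [h0, hprev0] at hxp; exact hxp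
        · rw [hsp, hprevS] at hxp
          exact Nat.find_min hn (by omega) hxp
      · intro hxj
        obtain ⟨j, hj, hxj⟩ := mem_iUnion₂.1 hxj
        exact Nat.find_min hk hj hxj
  · intro i
    have h1 : closure ((D i).1 ∩ (D i).2) ⊆ (D i).1 :=
      closure_minimal inter_subset_left ((hCsclosed _).inter
        (isClosed_compl_iff.2 (isOpen_biUnion fun j _ => hVopen j)))
    refine subset_trans h1 (subset_trans inter_subset_left ?_)
    exact subset_trans (subset_iUnion Cs (e i).1) hCsU.subset
  · intro i a ha b hb
    rw [hB i] at ha hb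
    have ha' : a ∈ V (e i).2 := ha.2.1
    have hb' : b ∈ V (e i).2 := hb.2.1
    rw [hV, mem_ball] at ha' hb'
    calc dist a b ≤ dist a (u (e i).2) + dist (u (e i).2) b := dist_triangle _ _ _
      _ ≤ ε / 2 + ε / 2 := by
          rw [dist_comm (u (e i).2) b]; exact add_le_add ha'.le hb'.le
      _ = ε := by ring

end Children
section Scheme
variable {X : Type} [MetricSpace X] [SecondCountableTopology X] [Nonempty X]

lemma children_aux' (p : Set X × Set X) (ε : ℝ) :
    ∃ D : ℕ → Set X × Set X, (IsClosed p.1 ∧ IsOpen p.2 ∧ 0 < ε) →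
      ((∀ i, IsClosed (D i).1 ∧ IsOpen (D i).2) ∧
      (∀ i j, i ≠ j → Disjoint ((D i).1 ∩ (D i).2) ((D j).1 ∩ (D j).2)) ∧
      (⋃ i, (D i).1 ∩ (D i).2) = p.1 ∩ p.2 ∧
      (∀ i, closure ((D i).1 ∩ (D i).2) ⊆ p.1 ∩ p.2) ∧
      (∀ i, ∀ a ∈ (D i).1 ∩ (D i).2, ∀ b ∈ (D i).1 ∩ (D i).2, dist a b ≤ ε)) := by
  by_cases h : IsClosed p.1 ∧ IsOpen p.2 ∧ 0 < ε
  · obtain ⟨D, h1, h2, h3, h4, h5⟩ := children_aux p.1 p.2 h.1 h.2.1 ε h.2.2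
    exact ⟨D, fun _ => ⟨h1, h2, h3, h4, h5⟩⟩
  · exact ⟨fun _ => (∅, ∅), fun hh => absurd hh h⟩

noncomputable def chl (p : Set X × Set X) (ε : ℝ) : ℕ → Set X × Set X :=
  (children_aux' p ε).choose

noncomputable def sch (C : Set X) : List ℕ → Set X × Set X
  | [] => (C, Set.univ)
  | i :: s => chl (sch C s) ((1/2 : ℝ) ^ (s.length + 1)) i

/-- The piece of the Lusin scheme indexed by a finite sequence. -/
noncomputable def Bs (C : Set X) (s : List ℕ) : Set X := (sch C s).1 ∩ (sch C s).2

lemma sch_co {C : Set X} (hC : IsClosed C) :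
    ∀ s : List ℕ, IsClosed (sch C s).1 ∧ IsOpen (sch C s).2 := by
  intro s
  induction s with
  | nil => exact ⟨hC, isOpen_univ⟩
  | cons i s ih =>
    have h := (children_aux' (sch C s) ((1/2 : ℝ) ^ (s.length + 1))).choose_spec
      ⟨ih.1, ih.2, by positivity⟩
    exact h.1 i

lemma sch_spec {C : Set X} (hC : IsClosed C) (s : List ℕ) :
    (∀ i j, i ≠ j → Disjoint (Bs C (i :: s)) (Bs C (j :: s))) ∧
    (⋃ i, Bs C (i :: s)) = Bs C s ∧
    (∀ i, closure (Bs C (i :: s)) ⊆ Bs C s) ∧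
    (∀ i, ∀ a ∈ Bs C (i :: s), ∀ b ∈ Bs C (i :: s),
      dist a b ≤ (1/2 : ℝ) ^ (s.length + 1)) := by
  have h := (children_aux' (sch C s) ((1/2 : ℝ) ^ (s.length + 1))).choose_spec
    ⟨(sch_co hC s).1, (sch_co hC s).2, by positivity⟩
  have hB : ∀ i, Bs C (i :: s) =
      ((chl (sch C s) ((1/2 : ℝ) ^ (s.length + 1)) i).1 ∩
       (chl (sch C s) ((1/2 : ℝ) ^ (s.length + 1)) i).2) := fun i => rfl
  refine ⟨fun i j hij => ?_, ?_, fun i => ?_, fun i => ?_⟩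
  · rw [hB i, hB j]; exact h.2.1 i j hij
  · rw [show (Bs C s) = (sch C s).1 ∩ (sch C s).2 from rfl, ← h.2.2.1]
    exact iUnion_congr fun i => (hB i).symm
  · rw [hB i]; exact h.2.2.2.1 i
  · rw [hB i]; exact h.2.2.2.2 i

/-- Going down the scheme along a branch: deeper sets are contained in shallower ones,
even after closure. -/
lemma sch_chain {C : Set X} (hC : IsClosed C) (x : ℕ → ℕ) :
    ∀ {m n : ℕ}, m ≤ n → Bs C (PiNat.res x n) ⊆ Bs C (PiNat.res x m) := by
  have step : ∀ n : ℕ, Bs C (PiNat.res x (n+1)) ⊆ Bs C (PiNat.res x n) := by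
    intro n
    rw [PiNat.res_succ]
    exact subset_trans subset_closure ((sch_spec hC (PiNat.res x n)).2.2.1 (x n))
  intro m n hmn
  induction n with
  | zero => rw [Nat.le_zero.1 hmn]
  | succ k ih =>
    rcases Nat.lt_or_ge m (k+1) with h | h
    · exact subset_trans (step k) (ih (by omega))
    · rw [le_antisymm hmn h]

lemma sch_closure_chain {C : Set X} (hC : IsClosed C) (x : ℕ → ℕ) (n : ℕ) :
    closure (Bs C (PiNat.res x (n+1))) ⊆ Bs C (PiNat.res x n) := by
  rw [PiNat.res_succ]
  exact (sch_spec hC (PiNat.res x n)).2.2.1 (x n)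

lemma sch_diam {C : Set X} (hC : IsClosed C) (x : ℕ → ℕ) (n : ℕ) :
    ∀ a ∈ Bs C (PiNat.res x (n+1)), ∀ b ∈ Bs C (PiNat.res x (n+1)),
      dist a b ≤ (1/2 : ℝ) ^ (n + 1) := by
  have h := (sch_spec hC (PiNat.res x n)).2.2.2 (x n)
  rw [← PiNat.res_succ] at h
  simpa [PiNat.res_length] using h

end Scheme
section SchemeMain
variable {X : Type} [MetricSpace X] [CompleteSpace X] [SecondCountableTopology X]

/-- Cylinders are open in the product topology. -/
lemma cylinder_open (x : ℕ → ℕ) (n : ℕ) :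
    IsOpen {y : ℕ → ℕ | PiNat.res y n = PiNat.res x n} := by
  have : {y : ℕ → ℕ | PiNat.res y n = PiNat.res x n}
      = ⋂ i : Fin n, (fun y : ℕ → ℕ => y i) ⁻¹' {x i} := by
    ext y
    simp only [mem_setOf_eq, PiNat.res_eq_res, mem_iInter, mem_preimage, mem_singleton_iff]
    exact ⟨fun h i => h i.2, fun h m hm => h ⟨m, hm⟩⟩
  rw [this]
  exact isOpen_iInter_of_finite fun i => (continuous_apply (i : ℕ)).isOpen_preimage _ trivial

/-- Every nonempty closed subset of a complete separable metric space is the bijective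
continuous image of a closed subset of Baire space. -/
theorem closed_image_of_baire (C : Set X) (hC : IsClosed C) (hne : C.Nonempty) :
    ∃ F : Set (ℕ → ℕ), IsClosed F ∧ ∃ f : (ℕ → ℕ) → X,
      ContinuousOn f F ∧ InjOn f F ∧ f '' F = C := by
  classical
  haveI : Nonempty X := ⟨hne.some⟩
  set F : Set (ℕ → ℕ) := {x | ∀ n, (Bs C (PiNat.res x n)).Nonempty} with hF
  -- limit function
  have limlem : ∀ x ∈ F, ∃ z : X, ∀ n, z ∈ Bs C (PiNat.res x n) := by
    intro x hx
    set w : ℕ → X := fun n => (hx (n+1)).some with hw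
    have hwmem : ∀ n, w n ∈ Bs C (PiNat.res x (n+1)) := fun n => (hx (n+1)).some_mem
    have hcauchy : CauchySeq w := by
      rw [Metric.cauchySeq_iff']
      intro ε hε
      obtain ⟨N, hN⟩ := exists_pow_lt_of_lt_one hε (by norm_num : (1/2 : ℝ) < 1)
      refine ⟨N, fun n hn => ?_⟩
      have h1 : w n ∈ Bs C (PiNat.res x (N+1)) :=
        sch_chain hC x (by omega) (hwmem n)
      have := sch_diam hC x N _ h1 _ (hwmem N)
      calc dist (w n) (w N) ≤ (1/2:ℝ)^(N+1) := this
        _ ≤ (1/2:ℝ)^N := by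
            apply pow_le_pow_of_le_one (by norm_num) (by norm_num); omega
        _ < ε := hN
    obtain ⟨z, hz⟩ := cauchySeq_tendsto_of_complete hcauchy
    refine ⟨z, fun n => ?_⟩
    have hzc : z ∈ closure (Bs C (PiNat.res x (n+1))) := by
      apply mem_closure_of_tendsto hz
      filter_upwards [Filter.eventually_ge_atTop n] with m hm
      exact sch_chain hC x (by omega) (hwmem m)
    exact sch_closure_chain hC x n hzc
  obtain ⟨f, hf⟩ : ∃ f : (ℕ → ℕ) → X, ∀ x ∈ F, ∀ n, f x ∈ Bs C (PiNat.res x n) := by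
    refine ⟨fun x => if hx : x ∈ F then (limlem x hx).choose else hne.some, ?_⟩
    intro x hx n
    simp only [dif_pos hx]
    exact (limlem x hx).choose_spec n
  -- uniqueness of points in all levels
  have uniq : ∀ x : ℕ → ℕ, ∀ z z' : X, (∀ n, z ∈ Bs C (PiNat.res x n)) →
      (∀ n, z' ∈ Bs C (PiNat.res x n)) → z = z' := by
    intro x z z' hz hz'
    have hd : ∀ n : ℕ, dist z z' ≤ (1/2:ℝ)^(n+1) :=
      fun n => sch_diam hC x n _ (hz (n+1)) _ (hz' (n+1))
    have : dist z z' ≤ 0 := by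
      refine le_of_forall_pos_le_add fun ε hε => le_of_lt ?_
      obtain ⟨N, hN⟩ := exists_pow_lt_of_lt_one hε (by norm_num : (1/2 : ℝ) < 1)
      calc dist z z' ≤ (1/2:ℝ)^(N+1) := hd N
        _ ≤ (1/2:ℝ)^N := by
            apply pow_le_pow_of_le_one (by norm_num) (by norm_num); omega
        _ < ε := hN
        _ ≤ 0 + ε := by linarith

    exact dist_le_zero.1 this
  refine ⟨F, ?_, f, ?_, ?_, ?_⟩
  · -- F is closed
    rw [← isOpen_compl_iff]
    rw [isOpen_iff_mem_nhds]
    intro x hx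
    simp only [hF, mem_compl_iff, mem_setOf_eq, not_forall] at hx
    obtain ⟨n, hn⟩ := hx
    have hsub : {y : ℕ → ℕ | PiNat.res y n = PiNat.res x n} ⊆ Fᶜ := by
      intro y hy
      simp only [hF, mem_compl_iff, mem_setOf_eq, not_forall]
      exact ⟨n, by rwa [hy]⟩
    exact Filter.mem_of_superset ((cylinder_open x n).mem_nhds rfl) hsub
  · -- continuity
    intro x hx
    rw [ContinuousWithinAt, Metric.tendsto_nhds]
    intro ε hε
    obtain ⟨N, hN⟩ := exists_pow_lt_of_lt_one hε (by norm_num : (1/2 : ℝ) < 1)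
    have hcyl : {y : ℕ → ℕ | PiNat.res y (N+1) = PiNat.res x (N+1)} ∈ nhdsWithin x F :=
      nhdsWithin_le_nhds ((cylinder_open x (N+1)).mem_nhds rfl)
    filter_upwards [hcyl, self_mem_nhdsWithin] with y hy hyF
    have h1 : f y ∈ Bs C (PiNat.res x (N+1)) := by
      rw [← hy]; exact hf y hyF (N+1)
    have h2 : f x ∈ Bs C (PiNat.res x (N+1)) := hf x hx (N+1)
    calc dist (f y) (f x) ≤ (1/2:ℝ)^(N+1) := sch_diam hC x N _ h1 _ h2
      _ ≤ (1/2:ℝ)^N := by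
          apply pow_le_pow_of_le_one (by norm_num) (by norm_num); omega
      _ < ε := hN
  · -- injectivity
    intro x hx y hy hxy
    by_contra hne'
    obtain ⟨N, hN1, hN2⟩ : ∃ N, x N ≠ y N ∧ ∀ m < N, x m = y m := by
      have hex : ∃ n, x n ≠ y n := by
        by_contra h
        push_neg at h
        exact hne' (funext h)
      exact ⟨Nat.find hex, Nat.find_spec hex, fun m hm => by
        have := Nat.find_min hex hm; push_neg at this; exact this⟩
    have hres : PiNat.res x N = PiNat.res y N := PiNat.res_eq_res.2 fun m hm => hN2 m hm
    have h1 : f x ∈ Bs C (x N :: PiNat.res x N) := by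
      have := hf x hx (N+1); rwa [PiNat.res_succ] at this
    have h2 : f y ∈ Bs C (y N :: PiNat.res x N) := by
      have := hf y hy (N+1); rwa [PiNat.res_succ, ← hres] at this
    have hdisj := (sch_spec hC (PiNat.res x N)).1 (x N) (y N) hN1
    rw [hxy] at h1
    exact (disjoint_left.1 hdisj h1) h2
  · -- image
    apply subset_antisymm
    · rintro - ⟨x, hx, rfl⟩
      have := hf x hx 0
      simpa [Bs, sch, PiNat.res_zero] using this.1
    · intro z hz
      -- build the branch
      have hz' : z ∈ Bs C [] := by simp [Bs, sch]; exact hz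
      have step : ∀ s : List ℕ, z ∈ Bs C s → ∃ i, z ∈ Bs C (i :: s) := by
        intro s hs
        have := (sch_spec hC s).2.1
        rw [← this] at hs
        exact mem_iUnion.1 hs
      let L : ∀ n : ℕ, {t : List ℕ // z ∈ Bs C t ∧ t.length = n} := fun n =>
        Nat.rec ⟨[], hz', rfl⟩
          (fun m ih => ⟨(step ih.1 ih.2.1).choose :: ih.1,
            (step ih.1 ih.2.1).choose_spec, by simp [ih.2.2]⟩) n
      set x : ℕ → ℕ := fun n => ((L (n+1)).1).headI with hx
      have hLsucc : ∀ n, (L (n+1)).1 = (step (L n).1 (L n).2.1).choose :: (L n).1 :=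
        fun n => rfl
      have hres : ∀ n, PiNat.res x n = (L n).1 := by
        intro n
        induction n with
        | zero =>
          have := (L 0).2.2
          rw [PiNat.res_zero]
          cases h : (L 0).1 with
          | nil => rfl
          | cons a l => rw [h] at this; simp at this
        | succ m ih =>
          rw [PiNat.res_succ, ih, hLsucc m]
          congr 1
      have hmem : ∀ n, z ∈ Bs C (PiNat.res x n) := fun n => by
        rw [hres n]; exact (L n).2.1
      have hxF : x ∈ F := fun n => ⟨z, hmem n⟩
      exact ⟨x, hxF, uniq x (f x) z (hf x hxF) hmem⟩

end SchemeMain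
open Topology in
/-- Any nonempty Borel subset of `ℝ` can be partitioned into at most `#𝒦` compact sets,
where `𝒦` is any partition of Baire space into compact sets. -/
lemma perPiece (𝒦 : Set (Set (ℕ → ℕ)))
    (h𝒦disj : ∀ a ∈ 𝒦, ∀ b ∈ 𝒦, a ≠ b → Disjoint a b)
    (h𝒦 : ∀ K ∈ 𝒦, IsCompact K)
    (h𝒦cover : ⋃₀ 𝒦 = Set.univ)
    (p : Set ℝ) (hpne : p.Nonempty) (hpm : MeasurableSet p) :
    ∃ Qp : Set (Set ℝ), (∀ a ∈ Qp, ∀ b ∈ Qp, a ≠ b → Disjoint a b) ∧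
      (∀ q ∈ Qp, q.Nonempty ∧ IsCompact q) ∧ ⋃₀ Qp = p ∧
      Cardinal.mk ↥Qp ≤ Cardinal.mk ↥𝒦 := by
  have main : ∃ F : Set (ℕ → ℕ), IsClosed F ∧ ∃ f : (ℕ → ℕ) → ℝ,
      (∀ s ⊆ F, IsCompact s → IsCompact (f '' s)) ∧ InjOn f F ∧ f '' F = p := by
    let τ : TopologicalSpace ℝ := inferInstance
    obtain ⟨t', ht'le, ht'pol, ht'closed, -⟩ := hpm.isClopenable
    obtain ⟨F, hFclosed, f, hfc, hfinj, hfim⟩ :=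
      @closed_image_of_baire ℝ (@upgradeIsCompletelyMetrizable ℝ t' ht'pol.toIsCompletelyMetrizableSpace).toMetricSpace
        (@upgradeIsCompletelyMetrizable ℝ t' ht'pol.toIsCompletelyMetrizableSpace).toCompleteSpace
        ht'pol.toSecondCountableTopology
        p ht'closed hpne
    refine ⟨F, hFclosed, f, ?_, hfinj, hfim⟩
    intro s hsF hs
    have hfc' : @ContinuousOn (ℕ → ℕ) ℝ _ t' f F := hfc
    have h2 := hs.image_of_continuousOn (hfc'.mono hsF)
    have h3 := @IsCompact.image ℝ ℝ t' τ _ id h2 (@continuous_id_of_le ℝ t' τ ht'le)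
    simpa using h3
  obtain ⟨F, hFclosed, f, hfcomp, hfinj, hfim⟩ := main
  have hcomp : ∀ K ∈ 𝒦, IsCompact (f '' (K ∩ F)) := fun K hK =>
    hfcomp _ inter_subset_right ((h𝒦 K hK).inter_right hFclosed)
  refine ⟨(fun K => f '' (K ∩ F)) '' {K ∈ 𝒦 | (K ∩ F).Nonempty}, ?_, ?_, ?_, ?_⟩
  · rintro - ⟨K1, hK1, rfl⟩ - ⟨K2, hK2, rfl⟩ hab
    have hK12 : K1 ≠ K2 := fun h => hab (by rw [h])
    have hdisj := h𝒦disj K1 hK1.1 K2 hK2.1 hK12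
    rw [Set.disjoint_iff_inter_eq_empty]
    rw [← hfinj.image_inter inter_subset_right inter_subset_right]
    have : (K1 ∩ F) ∩ (K2 ∩ F) = ∅ := by
      rw [Set.eq_empty_iff_forall_notMem]
      rintro x ⟨⟨h1, -⟩, h2, -⟩
      exact Set.disjoint_left.1 hdisj h1 h2
    rw [this, Set.image_empty]
  · rintro - ⟨K, hK, rfl⟩
    exact ⟨hK.2.image f, hcomp K hK.1⟩
  · apply subset_antisymm
    · rintro x ⟨-, ⟨K, hK, rfl⟩, hx⟩
      rw [← hfim]
      exact Set.image_mono inter_subset_right hx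
    · intro x hx
      rw [← hfim] at hx
      obtain ⟨w, hwF, rfl⟩ := hx
      have hw𝒦 : w ∈ ⋃₀ 𝒦 := by rw [h𝒦cover]; trivial
      obtain ⟨K, hK, hwK⟩ := hw𝒦
      exact ⟨f '' (K ∩ F), ⟨K, ⟨hK, ⟨w, hwK, hwF⟩⟩, rfl⟩, ⟨w, ⟨hwK, hwF⟩, rfl⟩⟩
  · exact le_trans Cardinal.mk_image_le (Cardinal.mk_le_mk_of_subset (sep_subset _ _))




open Cardinal Set

/-- If ℝ can be partitioned into κ Borel sets, κ uncountable and κ ≥ 𝔞_T (the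
least size of a partition of Baire space ω^ω into compact sets), then ℝ can be
partitioned into κ compact sets. -/
theorem stmt_19 (κ : Cardinal) (hκ : ℵ₀ < κ)
    (haT : sInf {c : Cardinal | ∃ P : Set (Set (ℕ → ℕ)),
      (∀ p ∈ P, ∀ q ∈ P, p ≠ q → Disjoint p q) ∧
      (∀ p ∈ P, p.Nonempty ∧ IsCompact p) ∧
      ⋃₀ P = Set.univ ∧ #P = c} ≤ κ)
    (P : Set (Set ℝ))
    (hdisj : ∀ p ∈ P, ∀ q ∈ P, p ≠ q → Disjoint p q)
    (hP : ∀ p ∈ P, p.Nonempty ∧ MeasurableSet p)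
    (hcover : ⋃₀ P = Set.univ)
    (hcard : #P = κ) :
    ∃ Q : Set (Set ℝ),
      (∀ p ∈ Q, ∀ q ∈ Q, p ≠ q → Disjoint p q) ∧
      (∀ p ∈ Q, p.Nonempty ∧ IsCompact p) ∧
      ⋃₀ Q = Set.univ ∧ #Q = κ := by
  classical
  set S : Set Cardinal := {c : Cardinal | ∃ P : Set (Set (ℕ → ℕ)),
      (∀ p ∈ P, ∀ q ∈ P, p ≠ q → Disjoint p q) ∧
      (∀ p ∈ P, p.Nonempty ∧ IsCompact p) ∧
      ⋃₀ P = Set.univ ∧ #P = c} with hS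
  have hSne : S.Nonempty := by
    refine ⟨#↥(Set.range fun x : ℕ → ℕ => ({x} : Set (ℕ → ℕ))),
      Set.range fun x : ℕ → ℕ => ({x} : Set (ℕ → ℕ)), ?_, ?_, ?_, rfl⟩
    · rintro - ⟨x, rfl⟩ - ⟨y, rfl⟩ hxy
      rw [Set.disjoint_iff_inter_eq_empty]
      rw [Set.eq_empty_iff_forall_notMem]
      rintro z ⟨hz1, hz2⟩
      rw [Set.mem_singleton_iff] at hz1 hz2
      exact hxy (by rw [← hz1, ← hz2])
    · rintro - ⟨x, rfl⟩
      exact ⟨Set.singleton_nonempty x, isCompact_singleton⟩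
    · ext x
      simp only [Set.mem_sUnion, Set.mem_univ, iff_true]
      exact ⟨{x}, ⟨x, rfl⟩, rfl⟩
  have hmem : sInf S ∈ S := csInf_mem hSne
  obtain ⟨𝒦, h𝒦disj, h𝒦ne, h𝒦cover, h𝒦card⟩ := hmem
  have h𝒦κ : #↥𝒦 ≤ κ := le_trans (le_of_eq h𝒦card) haT
  have key : ∀ p, p ∈ P → ∃ Qp : Set (Set ℝ),
      (∀ a ∈ Qp, ∀ b ∈ Qp, a ≠ b → Disjoint a b) ∧
      (∀ q ∈ Qp, q.Nonempty ∧ IsCompact q) ∧ ⋃₀ Qp = p ∧ #↥Qp ≤ #↥𝒦 :=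
    fun p hp => perPiece 𝒦 h𝒦disj (fun K hK => (h𝒦ne K hK).2) h𝒦cover p
      (hP p hp).1 (hP p hp).2
  choose Qf hQ1 hQ2 hQ3 hQ4 using key
  set Q : Set (Set ℝ) := ⋃ x : ↥P, Qf x.1 x.2 with hQ
  have hQmem : ∀ q, q ∈ Q ↔ ∃ p, ∃ hp : p ∈ P, q ∈ Qf p hp := by
    intro q
    simp only [hQ, Set.mem_iUnion, Subtype.exists]
  have hsub : ∀ p (hp : p ∈ P), ∀ q ∈ Qf p hp, q ⊆ p := by
    intro p hp q hq z hz
    rw [← hQ3 p hp]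
    exact ⟨q, hq, hz⟩
  refine ⟨Q, ?_, ?_, ?_, ?_⟩
  · intro q1 hq1 q2 hq2 hne
    obtain ⟨p1, hp1, hq1'⟩ := (hQmem q1).1 hq1
    obtain ⟨p2, hp2, hq2'⟩ := (hQmem q2).1 hq2
    by_cases hp : p1 = p2
    · subst hp
      exact hQ1 p1 hp1 q1 hq1' q2 hq2' hne
    · exact Set.disjoint_of_subset (hsub p1 hp1 q1 hq1') (hsub p2 hp2 q2 hq2')
        (hdisj p1 hp1 p2 hp2 hp)
  · intro q hq
    obtain ⟨p, hp, hq'⟩ := (hQmem q).1 hq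
    exact hQ2 p hp q hq'
  · ext x
    simp only [Set.mem_sUnion, Set.mem_univ, iff_true]
    have hx : x ∈ ⋃₀ P := by rw [hcover]; trivial
    obtain ⟨p, hp, hxp⟩ := hx
    rw [← hQ3 p hp] at hxp
    obtain ⟨q, hq, hxq⟩ := hxp
    exact ⟨q, (hQmem q).2 ⟨p, hp, hq⟩, hxq⟩
  · apply le_antisymm
    · have h1 : #↥Q ≤ #↥P * ⨆ x : ↥P, #↥(Qf x.1 x.2) :=
        mk_iUnion_le _
      have h2 : (⨆ x : ↥P, #↥(Qf x.1 x.2)) ≤ κ :=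
        ciSup_le' fun x => le_trans (hQ4 x.1 x.2) h𝒦κ
      calc #↥Q ≤ #↥P * ⨆ x : ↥P, #↥(Qf x.1 x.2) := h1
        _ ≤ κ * κ := by
            rw [hcard]
            exact mul_le_mul_right h2 κ
        _ = κ := mul_eq_self hκ.le
    · have hpick : ∀ x : ↥P, ∃ q, q ∈ Qf x.1 x.2 ∧ q.Nonempty := by
        intro x
        obtain ⟨z, hz⟩ := (hP x.1 x.2).1
        have hz' : z ∈ ⋃₀ Qf x.1 x.2 := by rw [hQ3 x.1 x.2]; exact hz
        obtain ⟨q, hq, hzq⟩ := hz'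
        exact ⟨q, hq, ⟨z, hzq⟩⟩
      choose g hg1 hg2 using hpick
      have hinj : Function.Injective (fun x : ↥P => (⟨g x, by
          rw [hQmem]; exact ⟨x.1, x.2, hg1 x⟩⟩ : ↥Q)) := by
        intro x y hxy
        simp only [Subtype.mk.injEq] at hxy
        obtain ⟨z, hz⟩ := hg2 x
        have hzx : z ∈ (x : Set ℝ) := hsub x.1 x.2 (g x) (hg1 x) hz
        have hzy : z ∈ (y : Set ℝ) := hsub y.1 y.2 (g y) (hg1 y) (hxy ▸ hz)
        by_contra hne
        have hne' : (x : Set ℝ) ≠ y := fun h => hne (Subtype.ext h)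
        exact Set.disjoint_left.1 (hdisj x.1 x.2 y.1 y.2 hne') hzx hzy
      calc κ = #↥P := hcard.symm
        _ ≤ #↥Q := mk_le_of_injective hinj
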